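/- arXiv:1312.0799 — 2 statements merged into one kernel-verified Lean document; each statement's English description precedes it below -/
import Mathlib

section
/- Fix N ≥ 1 and work in the ring of formal power series in variables t₀, t₁, …, t_N (over ℚ). There is a unique formal power series v = v(t₀,…,t_N) with zero constant term satisfying v = Σ_{p=0}^{N} t_p · v^p / p!, and it is given explicitly by v = Σ_{n≥1} (1/n) Σ_{p₁+⋯+p_n = n−1, 0 ≤ p_i ≤ N} (t_{p₁}/p₁!) ⋯ (t_{p_n}/p_n!). -/
/-- The coefficient, at the monomial `d`, of the explicit series
`v = Σ_{n≥1} (1/n) Σ_{p₁+⋯+p_n=n−1} (t_{p₁}/p₁!)⋯(t_{p_n}/p_n!)`. -/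
noncomputable def explicitVCoeff (N : ℕ) (d : Fin (N + 1) →₀ ℕ) : ℚ :=
  (1 / ((d.sum fun _ k => k : ℕ) : ℚ)) *
    ∑ p ∈ Finset.univ.filter (fun p : Fin (d.sum fun _ k => k) → Fin (N + 1) =>
        (∑ i, ((p i : ℕ))) + 1 = d.sum (fun _ k => k) ∧
        ∀ q, d q = (Finset.univ.filter fun i => p i = q).card),
      ∏ i, (1 / (((p i : ℕ).factorial : ℚ)))

/-- `v` has zero constant term and solves `v = Σ_{p=0}^N t_p v^p / p!`. -/
def IsDispersionlessTopologicalSolution (N : ℕ)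
    (v : MvPowerSeries (Fin (N + 1)) ℚ) : Prop :=
  MvPowerSeries.constantCoeff v = 0 ∧
  v = ∑ p : Fin (N + 1),
        (((p : ℕ).factorial : ℚ)⁻¹) • (MvPowerSeries.X p * v ^ (p : ℕ))

/-! ### List-level combinatorics -/

/-- prefix sum of a list of naturals -/
def psum (w : List ℕ) (k : ℕ) : ℕ := ∑ i ∈ Finset.range k, w.getD i 0

/-- Łukasiewicz word -/
def Luk (w : List ℕ) : Prop := w.sum + 1 = w.length ∧ ∀ k < w.length, k ≤ psum w k

instance : DecidablePred Luk := fun w => by unfold Luk; infer_instance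

/-- concatenation of `q` Łukasiewicz words -/
def IsForest : ℕ → List ℕ → Prop
  | 0, w => w = []
  | q + 1, w => ∃ u v, Luk u ∧ IsForest q v ∧ w = u ++ v

lemma psum_zero (w : List ℕ) : psum w 0 = 0 := by simp [psum]

lemma psum_succ (w : List ℕ) (k : ℕ) : psum w (k + 1) = psum w k + w.getD k 0 := by
  simp [psum, Finset.sum_range_succ]

lemma psum_mono (w : List ℕ) {j k : ℕ} (h : j ≤ k) : psum w j ≤ psum w k :=
  Finset.sum_le_sum_of_subset (Finset.range_subset_range.2 h)

lemma psum_cons (a : ℕ) (w : List ℕ) (k : ℕ) : psum (a :: w) (k + 1) = a + psum w k := by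
  simp only [psum, Finset.sum_range_succ']
  simp [add_comm]

lemma psum_length (w : List ℕ) : psum w w.length = w.sum := by
  induction w with
  | nil => simp [psum]
  | cons a w ih => simpa [psum_cons] using by omega

lemma psum_take (w : List ℕ) {k j : ℕ} (h : j ≤ k) : psum (w.take k) j = psum w j := by
  unfold psum
  apply Finset.sum_congr rfl
  intro i hi
  simp only [Finset.mem_range] at hi
  rcases Nat.lt_or_ge i w.length with h' | h'
  · have hi' : i < (w.take k).length := by rw [List.length_take]; omega
    rw [List.getD_eq_getElem _ _ hi', List.getD_eq_getElem _ _ h', List.getElem_take]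
  · rw [List.getD_eq_default _ _ h', List.getD_eq_default]
    rw [List.length_take]; omega

lemma sum_take_eq (w : List ℕ) {k : ℕ} (h : k ≤ w.length) : (w.take k).sum = psum w k := by
  have hl : (w.take k).length = k := by rw [List.length_take]; omega
  have h1 := psum_length (w.take k)
  rw [hl] at h1
  rw [← h1, psum_take w (le_refl k)]

lemma psum_append_le (u v : List ℕ) {k : ℕ} (h : k ≤ u.length) :
    psum (u ++ v) k = psum u k := by
  unfold psum
  apply Finset.sum_congr rfl
  intro i hi
  simp only [Finset.mem_range] at hi
  exact List.getD_append _ _ _ _ (by omega)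

lemma psum_append_add (u v : List ℕ) (t : ℕ) :
    psum (u ++ v) (u.length + t) = u.sum + psum v t := by
  induction t with
  | zero => rw [add_zero, psum_append_le u v (le_refl _), psum_length, psum_zero, add_zero]
  | succ t ih =>
    rw [← add_assoc, psum_succ, ih, psum_succ,
      List.getD_append_right u v 0 (u.length + t) (by omega)]
    simp [add_assoc]

lemma Luk.length_pos {w : List ℕ} (h : Luk w) : 0 < w.length := by
  have := h.1; omega

private lemma luk_eq_of_prefix_aux {u u' w : List ℕ} (hu : Luk u) (hu' : Luk u')
    (h : u <+: w) (h' : u' <+: w) (hle : u.length ≤ u'.length) : u = u' := by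
  have hpre : u <+: u' := List.prefix_of_prefix_length_le h h' hle
  rcases Nat.lt_or_ge u.length u'.length with hlt | hge
  · exfalso
    obtain ⟨t, rfl⟩ := hpre
    have h1 : psum (u ++ t) u.length = u.sum := by
      rw [psum_append_le _ _ (le_refl _), psum_length]
    have h2 := hu'.2 u.length (by simpa using hlt)
    have := hu.1
    omega
  · exact List.IsPrefix.eq_of_length hpre (by omega)

/-- Łukasiewicz prefixes of a common list are equal -/
lemma Luk.eq_of_prefix {u u' w : List ℕ} (hu : Luk u) (hu' : Luk u')
    (h : u <+: w) (h' : u' <+: w) : u = u' := by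
  rcases le_or_gt u.length u'.length with hle | hlt
  · exact luk_eq_of_prefix_aux hu hu' h h' hle
  · exact (luk_eq_of_prefix_aux hu' hu h' h (le_of_lt hlt)).symm

lemma IsForest.sum_add {q : ℕ} {w : List ℕ} (h : IsForest q w) : w.sum + q = w.length := by
  induction q generalizing w with
  | zero => cases h; simp
  | succ q ih =>
    obtain ⟨u, v, hu, hv, rfl⟩ := h
    have := ih hv
    have := hu.1
    simp only [List.sum_append, List.length_append]
    omega

lemma IsForest.psum_bound {q : ℕ} {w : List ℕ} (h : IsForest q w) :
    ∀ k < w.length, k + 1 ≤ psum w k + q := by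
  induction q generalizing w with
  | zero => cases h; simp
  | succ q ih =>
    obtain ⟨u, v, hu, hv, rfl⟩ := h
    intro k hk
    rcases Nat.lt_or_ge k u.length with h' | h'
    · have := hu.2 k h'
      rw [psum_append_le u v (by omega)]
      omega
    · obtain ⟨t, rfl⟩ := Nat.exists_eq_add_of_le h'
      have hteq : psum (u ++ v) (u.length + t) = u.sum + psum v t := psum_append_add u v t
      have hsum := hu.1
      have htlt : t < v.length := by
        simp only [List.length_append] at hk; omega
      have := ih hv t htlt
      omega

lemma isForest_of_bounds : ∀ (q : ℕ) (w : List ℕ), w.sum + q = w.length →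
    (∀ k < w.length, k + 1 ≤ psum w k + q) → IsForest q w := by
  intro q
  induction q with
  | zero =>
    intro w hsum hb
    cases w with
    | nil => rfl
    | cons a w =>
      exfalso
      have := hb 0 (by simp)
      simp [psum_zero] at this
  | succ q ih =>
    intro w hsum hb
    have hex : ∃ ℓ, psum w ℓ + 1 ≤ ℓ := ⟨w.length, by rw [psum_length]; omega⟩
    set ℓ := Nat.find hex with hℓdef
    have hℓ : psum w ℓ + 1 ≤ ℓ := Nat.find_spec hex
    have hmin : ∀ j < ℓ, ¬ (psum w j + 1 ≤ j) := fun j hj => Nat.find_min hex hj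
    have hℓpos : 0 < ℓ := by
      rcases Nat.eq_zero_or_pos ℓ with h | h
      · rw [h] at hℓ; simp [psum_zero] at hℓ
      · exact h
    have hℓle : ℓ ≤ w.length := Nat.find_le (by rw [psum_length]; omega)
    have hℓeq : psum w ℓ = ℓ - 1 := by
      have h1 := hmin (ℓ - 1) (by omega)
      have h2 : psum w (ℓ - 1) ≤ psum w ℓ := psum_mono w (by omega)
      omega
    have hlt : (w.take ℓ).length = ℓ := by rw [List.length_take]; omega
    refine ⟨w.take ℓ, w.drop ℓ, ?_, ?_, (List.take_append_drop ℓ w).symm⟩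
    · refine ⟨?_, ?_⟩
      · rw [sum_take_eq w hℓle, hlt]; omega
      · intro k hk
        rw [hlt] at hk
        rw [psum_take w (le_of_lt hk)]
        have := hmin k hk
        omega
    · apply ih
      · have h1 : (w.take ℓ).sum + (w.drop ℓ).sum = w.sum := by
          rw [← List.sum_append, List.take_append_drop]
        have h2 := sum_take_eq w hℓle
        simp only [List.length_drop]
        omega
      · intro t ht
        simp only [List.length_drop] at ht
        have hb' := hb (ℓ + t) (by omega)
        have key : psum w (ℓ + t) = psum w ℓ + psum (w.drop ℓ) t := by
          have h2 := psum_append_add (w.take ℓ) (w.drop ℓ) t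
          rw [List.take_append_drop, hlt, sum_take_eq w hℓle] at h2
          exact h2
        omega

lemma luk_cons_iff (a : ℕ) (w : List ℕ) : Luk (a :: w) ↔ IsForest a w := by
  constructor
  · rintro ⟨hsum, hps⟩
    simp only [List.sum_cons, List.length_cons] at hsum
    apply isForest_of_bounds
    · omega
    · intro k hk
      have := hps (k + 1) (by simp; omega)
      rw [psum_cons] at this
      omega
  · intro h
    have hsum := h.sum_add
    have hps := h.psum_bound
    constructor
    · simp; omega
    · intro k hk
      cases k with
      | zero => simp
      | succ t =>
        rw [psum_cons]
        simp only [List.length_cons] at hk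
        have := hps t (by omega)
        omega

lemma isForest_one_iff (w : List ℕ) : IsForest 1 w ↔ Luk w := by
  constructor
  · rintro ⟨u, v, hu, hv, rfl⟩
    cases hv; simpa using hu
  · intro h; exact ⟨w, [], h, rfl, (List.append_nil w).symm⟩

/-- the first-block length of a list -/
noncomputable def blockLen (w : List ℕ) : ℕ :=
  letI := Classical.dec (∃ ℓ, Luk (w.take ℓ))
  if h : ∃ ℓ, Luk (w.take ℓ) then Nat.find h else 0

lemma blockLen_append {u : List ℕ} (hu : Luk u) (v : List ℕ) :
    blockLen (u ++ v) = u.length := by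
  have hw : Luk ((u ++ v).take u.length) := by rw [List.take_left]; exact hu
  have hex : ∃ ℓ, Luk ((u ++ v).take ℓ) := ⟨u.length, hw⟩
  rw [blockLen]
  rw [dif_pos hex]
  apply le_antisymm (Nat.find_le hw)
  by_contra h
  push_neg at h
  have hspec := Nat.find_spec hex
  set ℓ := Nat.find hex with hℓ
  have heq : (u ++ v).take ℓ = u :=
    Luk.eq_of_prefix hspec hu (List.take_prefix _ _) (List.prefix_append u v)
  have hlen : ((u ++ v).take ℓ).length = ℓ := by
    rw [List.length_take, List.length_append]; omega
  rw [heq] at hlen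
  omega
open Finset

/-- rotation of a `Fin n`-indexed word -/
def rotF {n : ℕ} {α : Type*} [NeZero n] (k : Fin n) (p : Fin n → α) : Fin n → α :=
  fun i => p (i + k)

lemma rotF_rotF {n : ℕ} {α : Type*} [NeZero n] (k j : Fin n) (p : Fin n → α) :
    rotF k (rotF j p) = rotF (k + j) p := by
  funext i; simp [rotF, add_assoc]

lemma rotF_zero {n : ℕ} {α : Type*} [NeZero n] (p : Fin n → α) : rotF 0 p = p := by
  funext i; simp [rotF]

section Cycle

open Fin.NatCast

variable {m : ℕ} (p : Fin (m + 1) → ℕ)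

private def vp : ℕ → ℕ := fun i => p (i : Fin (m + 1))

private def PSf : ℕ → ℕ := fun t => ∑ i ∈ range t, vp p i

lemma PSf_succ (t : ℕ) : PSf p (t + 1) = PSf p t + vp p t := by
  simp [PSf, Finset.sum_range_succ]

lemma PSf_add (a t : ℕ) : PSf p (a + t) = PSf p a + ∑ i ∈ range t, vp p (a + i) := by
  induction t with
  | zero => simp
  | succ t ih => rw [← add_assoc, PSf_succ, ih, Finset.sum_range_succ]; ring

lemma PSf_period (hsum : (∑ i, p i) + 1 = m + 1) (t : ℕ) :
    PSf p (t + (m + 1)) = PSf p t + m := by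
  rw [PSf_add]
  congr 1
  have h1 : ∀ i : ℕ, vp p (t + i) = (fun j : Fin (m+1) => p ((t : Fin (m+1)) + j)) ((i : Fin (m+1))) := by
    intro i
    simp only [vp]
    congr 1
    push_cast
    ring
  calc ∑ i ∈ range (m+1), vp p (t + i)
      = ∑ j : Fin (m+1), vp p (t + (j : ℕ)) := (Fin.sum_univ_eq_sum_range (fun i => vp p (t + i)) (m+1)).symm
    _ = ∑ j : Fin (m+1), p ((t : Fin (m+1)) + j) := by
        apply Finset.sum_congr rfl
        intro j _
        have := h1 (j : ℕ)
        rwa [Fin.cast_val_eq_self] at this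
    _ = ∑ j : Fin (m+1), p j := Fintype.sum_equiv (Equiv.addLeft (t : Fin (m+1))) _ _ (fun j => rfl)
    _ = m := by omega

/-- characterization of a Łukasiewicz rotation via global prefix sums -/
lemma luk_rot_iff (hsum : (∑ i, p i) + 1 = m + 1) (k : Fin (m + 1)) :
    Luk (List.ofFn fun i => rotF k p i) ↔
      ∀ t < m + 1, PSf p (k : ℕ) + t ≤ PSf p ((k : ℕ) + t) := by
  have hlen : (List.ofFn fun i => rotF k p i).length = m + 1 := by simp
  have hgetD : ∀ i < m + 1, (List.ofFn fun i => rotF k p i).getD i 0 = vp p ((k : ℕ) + i) := by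
    intro i hi
    rw [List.getD_eq_getElem _ _ (by simpa using hi), List.getElem_ofFn]
    simp only [rotF, vp]
    congr 1
    rw [Fin.add_def]
    apply Fin.ext
    rw [Fin.val_natCast]
    simp [add_comm]
  have hps : ∀ t ≤ m + 1, psum (List.ofFn fun i => rotF k p i) t
      = ∑ i ∈ range t, vp p ((k : ℕ) + i) := by
    intro t ht
    unfold psum
    apply Finset.sum_congr rfl
    intro i hi
    simp only [Finset.mem_range] at hi
    exact hgetD i (by omega)
  have hsum' : (List.ofFn fun i => rotF k p i).sum = m := by
    rw [List.sum_ofFn]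
    have : ∑ i, rotF k p i = ∑ i, p i := Fintype.sum_equiv (Equiv.addRight k) _ _ (fun j => rfl)
    omega
  constructor
  · rintro ⟨-, h2⟩
    intro t ht
    have h3 := h2 t (by omega)
    rw [hps t (by omega)] at h3
    have h4 := PSf_add p (k : ℕ) t
    omega
  · intro h
    refine ⟨by omega, ?_⟩
    intro t ht
    rw [hlen] at ht
    rw [hps t (by omega)]
    have h3 := h t ht
    have h4 := PSf_add p (k : ℕ) t
    omega

theorem cycle_lemma (hsum : (∑ i, p i) + 1 = m + 1) :
    ∃! k : Fin (m + 1), Luk (List.ofFn fun i => rotF k p i) := by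
  classical
  set F : ℕ → ℤ := fun t => (PSf p t : ℤ) - t with hF
  have hFper : ∀ t, F (t + (m + 1)) = F t - 1 := by
    intro t
    simp only [hF]
    have := PSf_period p hsum t
    push_cast [this]
    ring
  have hne : ((range (m + 1)).image F).Nonempty := by
    refine ⟨F 0, Finset.mem_image_of_mem F ?_⟩; simp
  set M := ((range (m + 1)).image F).min' hne with hM
  have hMmem : ∃ x, x < m + 1 ∧ F x = M := by
    have := Finset.min'_mem _ hne
    rw [Finset.mem_image] at this
    obtain ⟨x, hx, hfx⟩ := this
    exact ⟨x, by simpa using hx, hfx⟩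
  have hMle : ∀ x < m + 1, M ≤ F x := by
    intro x hx
    exact Finset.min'_le _ _ (Finset.mem_image_of_mem F (by simpa using hx))
  obtain ⟨k₀, hk₀lt, hk₀F, hk₀min⟩ : ∃ k₀, k₀ < m + 1 ∧ F k₀ = M ∧ ∀ x < k₀, F x ≠ M := by
    refine ⟨Nat.find hMmem, (Nat.find_spec hMmem).1, (Nat.find_spec hMmem).2, ?_⟩
    intro x hx hFx
    exact Nat.find_min hMmem hx ⟨by have := (Nat.find_spec hMmem).1; omega, hFx⟩
  -- existence of the shift property at k₀
  have hshift : ∀ t < m + 1, PSf p k₀ + t ≤ PSf p (k₀ + t) := by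
    intro t ht
    rcases Nat.lt_or_ge (k₀ + t) (m + 1) with hc | hc
    · have h5 := hMle (k₀ + t) hc
      rw [← hk₀F] at h5
      simp only [hF] at h5
      omega
    · set r := k₀ + t - (m + 1) with hr
      have hrlt : r < k₀ := by omega
      have hFr : F (k₀ + t) = F r - 1 := by
        have he : k₀ + t = r + (m + 1) := by omega
        rw [he, hFper]
      have h1 : M ≤ F r := hMle r (by omega)
      have h2 : F r ≠ M := hk₀min r hrlt
      have h3 : M + 1 ≤ F r := by
        rcases lt_or_ge M (F r) with h | h
        · omega
        · exact absurd (le_antisymm h h1) h2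
      have h6 : F k₀ ≤ F (k₀ + t) := by rw [hFr, hk₀F]; omega
      simp only [hF] at h6
      omega
  have key : ∀ a b : ℕ, a < m + 1 → b < m + 1 → a < b →
      (∀ t < m + 1, PSf p a + t ≤ PSf p (a + t)) →
      (∀ t < m + 1, PSf p b + t ≤ PSf p (b + t)) → False := by
    intro a b ha hb hab hA hB
    have h1 := hA (b - a) (by omega)
    have h2 := hB (a + (m + 1) - b) (by omega)
    have e1 : a + (b - a) = b := by omega
    have e2 : b + (a + (m + 1) - b) = a + (m + 1) := by omega
    rw [e1] at h1
    rw [e2] at h2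
    have e3 : PSf p (a + (m + 1)) = PSf p a + m := PSf_period p hsum a
    omega
  refine ⟨⟨k₀, hk₀lt⟩, ?_, ?_⟩
  · show Luk (List.ofFn fun i => rotF ⟨k₀, hk₀lt⟩ p i)
    rw [luk_rot_iff p hsum]
    simpa using hshift
  · intro k' hk'
    replace hk' : Luk (List.ofFn fun i => rotF k' p i) := hk'
    rw [luk_rot_iff p hsum] at hk'
    by_contra hne'
    have hkk : (k' : ℕ) ≠ k₀ := by
      intro h
      exact hne' (Fin.ext (by simpa using h))
    rcases Nat.lt_or_ge (k' : ℕ) k₀ with hlt | hge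
    · exact key (k' : ℕ) k₀ k'.isLt hk₀lt hlt hk' hshift
    · exact key k₀ (k' : ℕ) hk₀lt k'.isLt (by omega) hshift hk'

end Cycle
section Count

open Finset

variable {N : ℕ}

/-- total degree of a multi-index -/
def nsize (d : Fin (N + 1) →₀ ℕ) : ℕ := d.sum fun _ k => k

/-- the list of arities of a word -/
def listOf {n : ℕ} (p : Fin n → Fin (N + 1)) : List ℕ := List.ofFn fun i => (p i : ℕ)

/-- the content of a word is `d` -/
def hasCont {n : ℕ} (p : Fin n → Fin (N + 1)) (d : Fin (N + 1) →₀ ℕ) : Prop :=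
  ∀ r, d r = (Finset.univ.filter fun i => p i = r).card

/-- words of length `n` with content `d` whose arity list is a forest of `q` trees -/
noncomputable def FW (N q n : ℕ) (d : Fin (N + 1) →₀ ℕ) : Finset (Fin n → Fin (N + 1)) :=
  @Finset.filter _ (fun p => hasCont p d ∧ IsForest q (listOf p)) (Classical.decPred _)
    Finset.univ

/-- words of length `n` with content `d` -/
noncomputable def SW (N n : ℕ) (d : Fin (N + 1) →₀ ℕ) : Finset (Fin n → Fin (N + 1)) :=
  @Finset.filter _ (fun p => hasCont p d) (Classical.decPred _) Finset.univ

lemma mem_FW {q n : ℕ} {d : Fin (N + 1) →₀ ℕ} {p : Fin n → Fin (N + 1)} :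
    p ∈ FW N q n d ↔ hasCont p d ∧ IsForest q (listOf p) := by
  simp [FW, Finset.mem_filter]

lemma mem_SW {n : ℕ} {d : Fin (N + 1) →₀ ℕ} {p : Fin n → Fin (N + 1)} :
    p ∈ SW N n d ↔ hasCont p d := by
  simp [SW, Finset.mem_filter]

lemma nsize_add (a b : Fin (N + 1) →₀ ℕ) : nsize (a + b) = nsize a + nsize b :=
  Finsupp.sum_add_index' (fun _ => rfl) (fun _ _ _ => rfl)

lemma nsize_single (q : Fin (N + 1)) (k : ℕ) : nsize (Finsupp.single q k) = k :=
  Finsupp.sum_single_index rfl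

lemma nsize_eq_zero {d : Fin (N + 1) →₀ ℕ} : nsize d = 0 ↔ d = 0 := by
  constructor
  · intro h
    ext r
    by_contra hr
    have hmem : r ∈ d.support := Finsupp.mem_support_iff.mpr (by simpa using hr)
    have : d r ≤ nsize d := Finset.single_le_sum (f := fun r => d r) (by intros; positivity) hmem
    have hz : ((0 : Fin (N + 1) →₀ ℕ)) r = 0 := rfl
    omega
  · rintro rfl; simp [nsize]

lemma nsize_fintype (d : Fin (N + 1) →₀ ℕ) : nsize d = ∑ r : Fin (N + 1), d r :=
  Finsupp.sum_fintype _ _ (fun _ => rfl)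

lemma hasCont_nsize {n : ℕ} {p : Fin n → Fin (N + 1)} {d : Fin (N + 1) →₀ ℕ}
    (h : hasCont p d) : nsize d = n := by
  rw [nsize_fintype]
  calc ∑ r : Fin (N + 1), d r
      = ∑ r : Fin (N + 1), (Finset.univ.filter fun i => p i = r).card :=
        Finset.sum_congr rfl fun r _ => h r
    _ = (Finset.univ : Finset (Fin n)).card :=
        (Finset.card_eq_sum_card_fiberwise (fun x _ => Finset.mem_univ (p x))).symm
    _ = n := by simp

lemma hasCont_sumval {n : ℕ} {p : Fin n → Fin (N + 1)} {d : Fin (N + 1) →₀ ℕ}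
    (h : hasCont p d) : ∑ i, (p i : ℕ) = ∑ r : Fin (N + 1), (r : ℕ) * d r := by
  rw [← Finset.sum_fiberwise_of_maps_to (fun x _ => Finset.mem_univ (p x)) (fun i => (p i : ℕ))]
  apply Finset.sum_congr rfl
  intro r _
  rw [h r]
  calc ∑ i ∈ Finset.univ.filter fun i => p i = r, (p i : ℕ)
      = ∑ _i ∈ Finset.univ.filter fun i => p i = r, (r : ℕ) := by
        apply Finset.sum_congr rfl
        intro i hi
        simp only [Finset.mem_filter] at hi
        rw [hi.2]
    _ = _ := by rw [Finset.sum_const, smul_eq_mul, mul_comm]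

lemma hasCont_prod {n : ℕ} {p : Fin n → Fin (N + 1)} {d : Fin (N + 1) →₀ ℕ}
    (h : hasCont p d) (f : Fin (N + 1) → ℚ) : ∏ i, f (p i) = ∏ r : Fin (N + 1), f r ^ d r := by
  rw [← Finset.prod_fiberwise_of_maps_to (fun x _ => Finset.mem_univ (p x)) (fun i => f (p i))]
  apply Finset.prod_congr rfl
  intro r _
  rw [h r]
  calc ∏ i ∈ Finset.univ.filter fun i => p i = r, f (p i)
      = ∏ _i ∈ Finset.univ.filter fun i => p i = r, f r := by
        apply Finset.prod_congr rfl
        intro i hi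
        simp only [Finset.mem_filter] at hi
        rw [hi.2]
    _ = _ := by rw [Finset.prod_const]

lemma card_fiber_succ {m : ℕ} (p : Fin (m + 1) → Fin (N + 1)) (r : Fin (N + 1)) :
    (Finset.univ.filter fun i => p i = r).card
      = (if p 0 = r then 1 else 0) + (Finset.univ.filter fun i : Fin m => p i.succ = r).card := by
  rw [Finset.card_filter, Finset.card_filter, Fin.sum_univ_succ]

lemma listOf_succ {m : ℕ} (p : Fin (m + 1) → Fin (N + 1)) :
    listOf p = ((p 0 : ℕ)) :: listOf (fun i : Fin m => p i.succ) := by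
  simp [listOf, List.ofFn_succ]

lemma length_listOf {n : ℕ} (p : Fin n → Fin (N + 1)) : (listOf p).length = n := by
  simp [listOf]

lemma sum_listOf {n : ℕ} (p : Fin n → Fin (N + 1)) : (listOf p).sum = ∑ i, (p i : ℕ) := by
  simp [listOf, List.sum_ofFn]

/-- the base case: forests with zero trees -/
lemma card_FW_zero (n : ℕ) (d : Fin (N + 1) →₀ ℕ) (hn : nsize d = n) :
    (FW N 0 n d).card = if d = 0 then 1 else 0 := by
  split_ifs with h
  · subst h
    have hn0 : n = 0 := by rw [← hn]; simp [nsize]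
    subst hn0
    have : FW N 0 0 (0 : Fin (N + 1) →₀ ℕ) = Finset.univ := by
      apply Finset.eq_univ_of_forall
      intro p
      rw [mem_FW]
      constructor
      · intro r
        rw [Finset.univ_eq_empty, Finset.filter_empty]
        simp
      · show IsForest 0 (listOf p)
        have : listOf p = [] := by simp [listOf]
        rw [this]; rfl
    rw [this, Finset.card_univ]
    simp
  · rw [Finset.card_eq_zero]
    apply Finset.eq_empty_of_forall_notMem
    intro p hp
    rw [mem_FW] at hp
    have h1 : listOf p = [] := hp.2
    have h2 : (listOf p).length = n := length_listOf p
    rw [h1] at h2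
    simp at h2
    rw [← h2] at hn
    exact h (nsize_eq_zero.mp hn)

/-- decomposition of a Łukasiewicz word by its first letter -/
lemma card_FW_one (m : ℕ) (d : Fin (N + 1) →₀ ℕ) (hm : nsize d = m + 1) :
    (FW N 1 (m + 1) d).card
      = ∑ q : Fin (N + 1), if Finsupp.single q 1 ≤ d
          then (FW N (q : ℕ) m (d - Finsupp.single q 1)).card else 0 := by
  classical
  rw [Finset.card_eq_sum_card_fiberwise (f := fun p => p 0) (t := Finset.univ)
    (fun x _ => Finset.mem_univ _)]
  apply Finset.sum_congr rfl
  intro q _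
  split_ifs with hle
  · have hdq : 1 ≤ d q := Finsupp.single_le_iff.mp hle
    refine Finset.card_bij' (fun p _ => (fun j : Fin m => p j.succ))
      (fun w _ => Fin.cons q w) ?_ ?_ ?_ ?_
    · -- i maps into FW
      intro p hp
      simp only [Finset.mem_filter] at hp
      obtain ⟨hp, hp0⟩ := hp
      rw [mem_FW] at hp
      obtain ⟨hc, hf⟩ := hp
      rw [mem_FW]
      constructor
      · intro r
        have h1 := card_fiber_succ p r
        rw [← hc r, hp0] at h1
        have h2 : ((d - Finsupp.single q 1) : Fin (N + 1) →₀ ℕ) r = d r - (if q = r then 1 else 0) := by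
          rw [Finsupp.tsub_apply, Finsupp.single_apply]
        rw [h2]
        by_cases he : q = r
        · rw [if_pos he] at h1 ⊢
          rw [h1, Nat.add_sub_cancel_left]
        · rw [if_neg he] at h1 ⊢
          rw [h1, Nat.zero_add, Nat.sub_zero]
      · have hluk : Luk (listOf p) := (isForest_one_iff _).mp hf
        rw [listOf_succ] at hluk
        rw [luk_cons_iff] at hluk
        rwa [hp0] at hluk
    · -- j maps into fiber
      intro w hw
      rw [mem_FW] at hw
      obtain ⟨hc, hf⟩ := hw
      simp only [Finset.mem_filter, mem_FW]
      refine ⟨⟨?_, ?_⟩, by simp⟩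
      · intro r
        have h1 := card_fiber_succ (Fin.cons q w) r
        simp only [Fin.cons_zero, Fin.cons_succ] at h1
        rw [← hc r] at h1
        rw [Finsupp.tsub_apply, Finsupp.single_apply] at h1
        rw [h1]
        by_cases he : q = r
        · rw [if_pos he] at *
          subst he
          omega
        · rw [if_neg he] at *
          omega
      · rw [isForest_one_iff, listOf_succ]
        simp only [Fin.cons_zero, Fin.cons_succ]
        rw [luk_cons_iff]
        exact hf
    · -- left inverse
      intro p hp
      simp only [Finset.mem_filter] at hp
      funext i
      show @Fin.cons m (fun _ => Fin (N + 1)) q (fun j => p j.succ) i = p i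
      cases i using Fin.cases with
      | zero => rw [Fin.cons_zero, hp.2]
      | succ j => rw [Fin.cons_succ]
    · -- right inverse
      intro w _
      funext i
      exact @Fin.cons_succ m (fun _ => Fin (N + 1)) q w i
  · rw [Finset.card_eq_zero]
    apply Finset.eq_empty_of_forall_notMem
    intro p hp
    simp only [Finset.mem_filter, mem_FW] at hp
    obtain ⟨⟨hc, -⟩, hp0⟩ := hp
    apply hle
    rw [Finsupp.single_le_iff, hc q]
    exact Finset.card_pos.mpr ⟨0, by simp [hp0]⟩

end Count
section Split

open Finset

variable {N : ℕ}

/-- left part of a word split -/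
def fsplitL {α : Type*} {m₁ m₂ n : ℕ} (h : m₁ + m₂ = n) (p : Fin n → α) : Fin m₁ → α :=
  fun i => p (Fin.cast h (Fin.castAdd m₂ i))

/-- right part of a word split -/
def fsplitR {α : Type*} {m₁ m₂ n : ℕ} (h : m₁ + m₂ = n) (p : Fin n → α) : Fin m₂ → α :=
  fun i => p (Fin.cast h (Fin.natAdd m₁ i))

/-- joining two words -/
def fjoin {α : Type*} {m₁ m₂ n : ℕ} (h : m₁ + m₂ = n) (u : Fin m₁ → α) (v : Fin m₂ → α) :
    Fin n → α :=
  fun i => Fin.append u v (Fin.cast h.symm i)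

lemma fsplitL_fjoin {α : Type*} {m₁ m₂ n : ℕ} (h : m₁ + m₂ = n) (u : Fin m₁ → α)
    (v : Fin m₂ → α) : fsplitL h (fjoin h u v) = u := by
  funext i
  show Fin.append u v (Fin.cast h.symm (Fin.cast h (Fin.castAdd m₂ i))) = u i
  have : Fin.cast h.symm (Fin.cast h (Fin.castAdd m₂ i)) = Fin.castAdd m₂ i := by
    apply Fin.ext; simp
  rw [this, Fin.append_left]

lemma fsplitR_fjoin {α : Type*} {m₁ m₂ n : ℕ} (h : m₁ + m₂ = n) (u : Fin m₁ → α)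
    (v : Fin m₂ → α) : fsplitR h (fjoin h u v) = v := by
  funext i
  show Fin.append u v (Fin.cast h.symm (Fin.cast h (Fin.natAdd m₁ i))) = v i
  have : Fin.cast h.symm (Fin.cast h (Fin.natAdd m₁ i)) = Fin.natAdd m₁ i := by
    apply Fin.ext; simp
  rw [this, Fin.append_right]

lemma append_fsplit {α : Type*} {m₁ m₂ n : ℕ} (h : m₁ + m₂ = n) (p : Fin n → α)
    (j : Fin (m₁ + m₂)) : Fin.append (fsplitL h p) (fsplitR h p) j = p (Fin.cast h j) := by
  induction j using Fin.addCases with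
  | left jl => rw [Fin.append_left]; rfl
  | right jr => rw [Fin.append_right]; rfl

lemma fjoin_fsplit {α : Type*} {m₁ m₂ n : ℕ} (h : m₁ + m₂ = n) (p : Fin n → α) :
    fjoin h (fsplitL h p) (fsplitR h p) = p := by
  funext i
  show Fin.append (fsplitL h p) (fsplitR h p) (Fin.cast h.symm i) = p i
  rw [append_fsplit]
  exact congrArg p (Fin.ext (by simp))

lemma ofFn_fjoin {α : Type*} {m₁ m₂ n : ℕ} (h : m₁ + m₂ = n) (u : Fin m₁ → α)
    (v : Fin m₂ → α) : List.ofFn (fjoin h u v) = List.ofFn u ++ List.ofFn v := by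
  subst h
  have h1 : fjoin rfl u v = Fin.append u v := by funext i; rfl
  rw [h1, List.ofFn_add]
  congr 1
  · exact congrArg List.ofFn (funext fun i => Fin.append_left u v i)
  · exact congrArg List.ofFn (funext fun i => Fin.append_right u v i)

lemma listOf_fjoin {m₁ m₂ n : ℕ} (h : m₁ + m₂ = n) (u : Fin m₁ → Fin (N + 1))
    (v : Fin m₂ → Fin (N + 1)) : listOf (fjoin h u v) = listOf u ++ listOf v := by
  have h1 : (fun i => Fin.val (fjoin h u v i)) =
      fjoin h (fun i => Fin.val (u i)) (fun i => Fin.val (v i)) := by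
    funext i
    show Fin.val (Fin.append u v (Fin.cast h.symm i)) =
      Fin.append (fun i => Fin.val (u i)) (fun i => Fin.val (v i)) (Fin.cast h.symm i)
    generalize Fin.cast h.symm i = j
    induction j using Fin.addCases with
    | left jl => rw [Fin.append_left, Fin.append_left]
    | right jr => rw [Fin.append_right, Fin.append_right]
  show List.ofFn (fun i => Fin.val (fjoin h u v i)) = _
  rw [h1, ofFn_fjoin]
  rfl

lemma listOf_fsplit {m₁ m₂ n : ℕ} (h : m₁ + m₂ = n) (p : Fin n → Fin (N + 1)) :
    listOf p = listOf (fsplitL h p) ++ listOf (fsplitR h p) := by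
  conv_lhs => rw [← fjoin_fsplit h p]
  rw [listOf_fjoin]

/-- cardinality of a fiber splits along a position cut -/
lemma card_fiber_cut {n : ℕ} (p : Fin n → Fin (N + 1)) (r : Fin (N + 1)) (m₁ : ℕ) :
    (Finset.univ.filter fun i => p i = r).card
      = (Finset.univ.filter fun i : Fin n => (i : ℕ) < m₁ ∧ p i = r).card
        + (Finset.univ.filter fun i : Fin n => ¬((i : ℕ) < m₁) ∧ p i = r).card := by
  classical
  rw [Finset.card_filter, Finset.card_filter, Finset.card_filter, ← Finset.sum_add_distrib]
  apply Finset.sum_congr rfl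
  intro i _
  by_cases hi : (i : ℕ) < m₁ <;> by_cases hp : p i = r <;> simp [hi, hp]

lemma card_fiber_splitL {m₁ m₂ n : ℕ} (h : m₁ + m₂ = n) (p : Fin n → Fin (N + 1))
    (r : Fin (N + 1)) :
    (Finset.univ.filter fun i : Fin n => (i : ℕ) < m₁ ∧ p i = r).card
      = (Finset.univ.filter fun i : Fin m₁ => fsplitL h p i = r).card := by
  refine Finset.card_bij'
    (fun i hi => (⟨(i : ℕ), (Finset.mem_filter.mp hi).2.1⟩ : Fin m₁))
    (fun i' _ => Fin.cast h (Fin.castAdd m₂ i')) ?_ ?_ ?_ ?_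
  · intro i hi
    simp only [Finset.mem_filter] at hi ⊢
    refine ⟨Finset.mem_univ _, ?_⟩
    show p (Fin.cast h (Fin.castAdd m₂ ⟨(i : ℕ), _⟩)) = r
    have : Fin.cast h (Fin.castAdd m₂ ⟨(i : ℕ), hi.2.1⟩) = i := by apply Fin.ext; simp
    rw [this]
    exact hi.2.2
  · intro i' hi'
    simp only [Finset.mem_filter] at hi' ⊢
    refine ⟨Finset.mem_univ _, ?_, ?_⟩
    · simpa using i'.isLt
    · exact hi'.2
  · intro i hi
    apply Fin.ext; simp
  · intro i' hi'
    apply Fin.ext; simp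

lemma card_fiber_splitR {m₁ m₂ n : ℕ} (h : m₁ + m₂ = n) (p : Fin n → Fin (N + 1))
    (r : Fin (N + 1)) :
    (Finset.univ.filter fun i : Fin n => ¬((i : ℕ) < m₁) ∧ p i = r).card
      = (Finset.univ.filter fun i : Fin m₂ => fsplitR h p i = r).card := by
  refine Finset.card_bij'
    (fun i hi => (⟨(i : ℕ) - m₁, by
      have h1 := (Finset.mem_filter.mp hi).2.1
      have h2 := i.isLt
      omega⟩ : Fin m₂))
    (fun i' _ => Fin.cast h (Fin.natAdd m₁ i')) ?_ ?_ ?_ ?_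
  · intro i hi
    simp only [Finset.mem_filter] at hi ⊢
    refine ⟨Finset.mem_univ _, ?_⟩
    show p (Fin.cast h (Fin.natAdd m₁ ⟨(i : ℕ) - m₁, _⟩)) = r
    have : Fin.cast h (Fin.natAdd m₁ (⟨(i : ℕ) - m₁, by
        have h1 := hi.2.1
        have h2 := i.isLt
        omega⟩ : Fin m₂)) = i := by
      apply Fin.ext
      simp only [Fin.coe_cast, Fin.coe_natAdd]
      have := hi.2.1
      omega
    rw [this]
    exact hi.2.2
  · intro i' hi'
    simp only [Finset.mem_filter] at hi' ⊢
    refine ⟨Finset.mem_univ _, ?_, ?_⟩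
    · simp
    · exact hi'.2
  · intro i hi
    simp only [Finset.mem_filter] at hi
    apply Fin.ext
    simp only [Fin.coe_cast, Fin.coe_natAdd]
    have := hi.2.1
    omega
  · intro i' hi'
    apply Fin.ext; simp

lemma card_fiber_fjoin {m₁ m₂ n : ℕ} (h : m₁ + m₂ = n) (u : Fin m₁ → Fin (N + 1))
    (v : Fin m₂ → Fin (N + 1)) (r : Fin (N + 1)) :
    (Finset.univ.filter fun i => fjoin h u v i = r).card
      = (Finset.univ.filter fun i => u i = r).card
        + (Finset.univ.filter fun i => v i = r).card := by
  classical
  rw [Finset.card_filter, Finset.card_filter, Finset.card_filter]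
  have e1 : ∑ i : Fin n, (if fjoin h u v i = r then 1 else 0)
      = ∑ j : Fin (m₁ + m₂), (if Fin.append u v j = r then 1 else 0) := by
    apply Fintype.sum_equiv (finCongr h.symm)
    intro i
    rfl
  rw [e1, Fin.sum_univ_add]
  congr 1
  · apply Finset.sum_congr rfl; intro i _; rw [Fin.append_left]
  · apply Finset.sum_congr rfl; intro i _; rw [Fin.append_right]

lemma card_filter_val_lt (n ℓ : ℕ) (hℓ : ℓ ≤ n) :
    (Finset.univ.filter fun i : Fin n => (i : ℕ) < ℓ).card = ℓ := by
  rw [Finset.card_filter]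
  rw [Fin.sum_univ_eq_sum_range (fun i => if i < ℓ then 1 else 0) n]
  rw [← Finset.card_filter]
  have : (Finset.range n).filter (fun i => i < ℓ) = Finset.range ℓ := by
    ext x
    simp only [Finset.mem_filter, Finset.mem_range]
    omega
  rw [this, Finset.card_range]

/-- content of the first block of a word -/
noncomputable def firstCont {n : ℕ} (p : Fin n → Fin (N + 1)) : Fin (N + 1) →₀ ℕ :=
  Finsupp.equivFunOnFinite.symm fun r =>
    (Finset.univ.filter fun i : Fin n => (i : ℕ) < blockLen (listOf p) ∧ p i = r).card

lemma firstCont_apply {n : ℕ} (p : Fin n → Fin (N + 1)) (r : Fin (N + 1)) :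
    firstCont p r
      = (Finset.univ.filter fun i : Fin n => (i : ℕ) < blockLen (listOf p) ∧ p i = r).card := by
  simp [firstCont]

lemma nsize_firstCont {n : ℕ} (p : Fin n → Fin (N + 1)) (hℓ : blockLen (listOf p) ≤ n) :
    nsize (firstCont p) = blockLen (listOf p) := by
  classical
  rw [nsize_fintype]
  have h1 : ∀ r, firstCont p r
      = ((Finset.univ.filter fun i : Fin n => (i : ℕ) < blockLen (listOf p)).filter
          fun i => p i = r).card := by
    intro r
    rw [firstCont_apply, Finset.filter_filter]
  calc ∑ r : Fin (N + 1), firstCont p r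
      = ∑ r : Fin (N + 1), ((Finset.univ.filter fun i : Fin n =>
          (i : ℕ) < blockLen (listOf p)).filter fun i => p i = r).card :=
        Finset.sum_congr rfl fun r _ => h1 r
    _ = (Finset.univ.filter fun i : Fin n => (i : ℕ) < blockLen (listOf p)).card :=
        (Finset.card_eq_sum_card_fiberwise (fun x _ => Finset.mem_univ (p x))).symm
    _ = blockLen (listOf p) := card_filter_val_lt n _ hℓ

/-- the fundamental recursion: a forest of `q+1` trees decomposes into its first tree
and a forest of `q` trees -/
lemma card_FW_succ (q n : ℕ) (d : Fin (N + 1) →₀ ℕ) (hn : nsize d = n) :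
    (FW N (q + 1) n d).card
      = ∑ ab ∈ Finset.HasAntidiagonal.antidiagonal d,
          (FW N 1 (nsize ab.1) ab.1).card * (FW N q (nsize ab.2) ab.2).card := by
  classical
  rw [Finset.card_eq_sum_card_fiberwise
    (f := fun p => (firstCont p, d - firstCont p)) (t := Finset.HasAntidiagonal.antidiagonal d) ?hmaps]
  case hmaps =>
    intro p hp
    rw [Finset.mem_coe, mem_FW] at hp
    rw [Finset.mem_coe, Finset.HasAntidiagonal.mem_antidiagonal]
    apply add_tsub_cancel_of_le
    rw [Finsupp.le_def]
    intro r
    rw [firstCont_apply, hp.1 r]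
    apply Finset.card_le_card
    intro i hi
    simp only [Finset.mem_filter] at hi ⊢
    exact ⟨hi.1, hi.2.2⟩
  apply Finset.sum_congr rfl
  rintro ⟨a, b⟩ hab
  rw [Finset.HasAntidiagonal.mem_antidiagonal] at hab
  have hsz : nsize a + nsize b = n := by rw [← nsize_add, hab, hn]
  rw [← Finset.card_product]
  apply Finset.card_bij' (i := fun p _ => (fsplitL hsz p, fsplitR hsz p))
    (j := fun w _ => fjoin hsz w.1 w.2) ?hi ?hj ?hleft ?hright
  case hi =>
    intro p hp
    simp only [Finset.mem_filter, mem_FW] at hp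
    obtain ⟨⟨hc, hf⟩, hfc⟩ := hp
    have hfc1 : firstCont p = a := (Prod.mk.injEq _ _ _ _).mp hfc |>.1
    obtain ⟨u, v, hu, hv, huv⟩ := hf
    have hbl : blockLen (listOf p) = u.length := by rw [huv, blockLen_append hu]
    have hℓn : blockLen (listOf p) ≤ n := by
      rw [hbl]
      have := length_listOf p
      rw [huv] at this
      simp only [List.length_append] at this
      omega
    have hm₁ : nsize a = blockLen (listOf p) := by
      rw [← hfc1, nsize_firstCont p hℓn]
    -- the split lists agree with u and v
    have hsplit : listOf p = listOf (fsplitL hsz p) ++ listOf (fsplitR hsz p) :=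
      listOf_fsplit hsz p
    have hlenL : (listOf (fsplitL hsz p)).length = u.length := by
      rw [length_listOf, hm₁, hbl]
    have huL : u = listOf (fsplitL hsz p) ∧ v = listOf (fsplitR hsz p) := by
      have := huv.symm.trans hsplit
      exact List.append_inj this (by rw [hlenL])
    have hab' : a + b = d := hab
    have h2 : ∀ r, a r = (Finset.univ.filter
        fun i : Fin n => (i : ℕ) < nsize a ∧ p i = r).card := by
      intro r
      conv_lhs => rw [← hfc1]
      rw [firstCont_apply, ← hm₁]
    rw [Finset.mem_product, mem_FW, mem_FW]
    refine ⟨⟨?_, ?_⟩, ?_, ?_⟩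
    · -- content of left split is a
      intro r
      show a r = (Finset.univ.filter fun i => fsplitL hsz p i = r).card
      rw [h2 r, card_fiber_splitL hsz p r]
    · show IsForest 1 (listOf (fsplitL hsz p))
      rw [isForest_one_iff, ← huL.1]
      exact hu
    · -- content of right split is b
      intro r
      show b r = (Finset.univ.filter fun i => fsplitR hsz p i = r).card
      have h1 := card_fiber_cut p r (nsize a)
      have h3 : d r = (Finset.univ.filter fun i => p i = r).card := hc r
      have h4 : a r + b r = d r := by rw [← Finsupp.add_apply, hab']
      have h5 := h2 r
      rw [← card_fiber_splitR hsz p r]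
      omega
    · show IsForest q (listOf (fsplitR hsz p))
      rw [← huL.2]
      exact hv
  case hj =>
    rintro ⟨w₁, w₂⟩ hw
    rw [Finset.mem_product, mem_FW, mem_FW] at hw
    obtain ⟨⟨hc1, hf1⟩, hc2, hf2⟩ := hw
    have hluk : Luk (listOf w₁) := (isForest_one_iff _).mp hf1
    have hjoin : listOf (fjoin hsz w₁ w₂) = listOf w₁ ++ listOf w₂ := listOf_fjoin hsz w₁ w₂
    have hbl : blockLen (listOf (fjoin hsz w₁ w₂)) = nsize a := by
      rw [hjoin, blockLen_append hluk, length_listOf]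
    have hcont : hasCont (fjoin hsz w₁ w₂) d := by
      intro r
      rw [card_fiber_fjoin hsz w₁ w₂ r, ← hc1 r, ← hc2 r, ← Finsupp.add_apply, hab]
    have hfca : firstCont (fjoin hsz w₁ w₂) = a := by
      ext r
      rw [firstCont_apply, hbl]
      rw [card_fiber_splitL hsz (fjoin hsz w₁ w₂) r, fsplitL_fjoin]
      exact (hc1 r).symm
    simp only [Finset.mem_filter, mem_FW]
    refine ⟨⟨hcont, ?_⟩, ?_⟩
    · exact ⟨listOf w₁, listOf w₂, hluk, hf2, hjoin⟩
    · rw [hfca, Prod.mk.injEq]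
      refine ⟨rfl, ?_⟩
      rw [← hab, add_tsub_cancel_left]
  case hleft =>
    intro p _
    exact fjoin_fsplit hsz p
  case hright =>
    rintro ⟨w₁, w₂⟩ _
    rw [Prod.mk.injEq]
    exact ⟨fsplitL_fjoin hsz w₁ w₂, fsplitR_fjoin hsz w₁ w₂⟩

end Split
section CycleCount

open Finset

variable {N : ℕ}

lemma hasCont_rotF {m : ℕ} {p : Fin (m + 1) → Fin (N + 1)} {d : Fin (N + 1) →₀ ℕ}
    (k : Fin (m + 1)) (h : hasCont p d) : hasCont (rotF k p) d := by
  intro r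
  rw [h r]
  refine Finset.card_bij' (fun i _ => i - k) (fun i _ => i + k) ?_ ?_ ?_ ?_
  · intro i hi
    simp only [Finset.mem_filter] at hi ⊢
    refine ⟨Finset.mem_univ _, ?_⟩
    show p (i - k + k) = r
    rw [sub_add_cancel]
    exact hi.2
  · intro i hi
    simp only [Finset.mem_filter] at hi ⊢
    exact ⟨Finset.mem_univ _, hi.2⟩
  · intro i _
    exact sub_add_cancel i k
  · intro i _
    exact add_sub_cancel_right i k

/-- the unique Łukasiewicz shift of a word (junk value if none exists) -/
noncomputable def ukF {m : ℕ} {N : ℕ} (p : Fin (m + 1) → Fin (N + 1)) : Fin (m + 1) :=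
  Classical.epsilon fun k => Luk (listOf (rotF k p))

lemma listOf_rotF {m : ℕ} (p : Fin (m + 1) → Fin (N + 1)) (k : Fin (m + 1)) :
    listOf (rotF k p) = List.ofFn fun i => rotF k (fun j => ((p j : ℕ))) i := rfl

lemma exists_unique_shift {m : ℕ} {p : Fin (m + 1) → Fin (N + 1)}
    (hsum : (∑ i, ((p i : ℕ))) + 1 = m + 1) :
    ∃! k : Fin (m + 1), Luk (listOf (rotF k p)) := by
  have := cycle_lemma (fun j => ((p j : ℕ))) hsum
  obtain ⟨k, hk, hk'⟩ := this
  exact ⟨k, hk, fun y hy => hk' y hy⟩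

lemma ukF_spec {m : ℕ} {p : Fin (m + 1) → Fin (N + 1)}
    (h : ∃ k : Fin (m + 1), Luk (listOf (rotF k p))) : Luk (listOf (rotF (ukF p) p)) :=
  Classical.epsilon_spec h

/-- counting form of the cycle lemma -/
lemma card_SW_eq (n : ℕ) (d : Fin (N + 1) →₀ ℕ)
    (hw : (∑ r : Fin (N + 1), (r : ℕ) * d r) + 1 = n) :
    (SW N n d).card = n * (FW N 1 n d).card := by
  obtain ⟨m, rfl⟩ : ∃ m, n = m + 1 := ⟨∑ r : Fin (N + 1), (r : ℕ) * d r, hw.symm⟩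
  have hcard : (m + 1) * (FW N 1 (m + 1) d).card
      = ((FW N 1 (m + 1) d) ×ˢ (Finset.univ : Finset (Fin (m + 1)))).card := by
    rw [Finset.card_product]
    simp [mul_comm]
  rw [hcard]
  symm
  -- the sum of values of any word with content d
  have hsum : ∀ {p : Fin (m + 1) → Fin (N + 1)}, hasCont p d →
      (∑ i, ((p i : ℕ))) + 1 = m + 1 := by
    intro p hc
    rw [hasCont_sumval hc]
    exact hw
  apply Finset.card_nbij' (i := fun wk => rotF wk.2 wk.1)
    (j := fun p => (rotF (ukF p) p, -(ukF p)))
  · rintro ⟨w, k⟩ hwk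
    simp only [Finset.mem_coe, Finset.mem_product, mem_FW] at hwk
    rw [Finset.mem_coe, mem_SW]
    exact hasCont_rotF k hwk.1.1
  · intro p hp
    rw [Finset.mem_coe, mem_SW] at hp
    have hex := exists_unique_shift (hsum hp)
    have hluk := ukF_spec hex.exists
    simp only [Finset.mem_coe, Finset.mem_product, mem_FW]
    exact ⟨⟨hasCont_rotF _ hp, (isForest_one_iff _).mpr hluk⟩, Finset.mem_univ _⟩
  · rintro ⟨w, k⟩ hwk
    simp only [Finset.mem_coe, Finset.mem_product, mem_FW] at hwk
    have hlukw : Luk (listOf w) := (isForest_one_iff _).mp hwk.1.2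
    have hex := exists_unique_shift (hsum hwk.1.1)
    have h0 : Luk (listOf (rotF (0 : Fin (m + 1)) w)) := by rw [rotF_zero]; exact hlukw
    -- the Łukasiewicz shift of `rotF k w` is `-k`
    have hexr : ∃ k' : Fin (m + 1), Luk (listOf (rotF k' (rotF k w))) :=
      ⟨-k, by rw [rotF_rotF, neg_add_cancel, rotF_zero]; exact hlukw⟩
    have hspec := ukF_spec hexr
    rw [rotF_rotF] at hspec
    have huk : ukF (rotF k w) + k = 0 := hex.unique hspec h0
    have huk' : ukF (rotF k w) = -k := by
      have := congrArg (fun x => x - k) huk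
      simpa [add_sub_cancel_right] using this
    show (rotF (ukF (rotF k w)) (rotF k w), -(ukF (rotF k w))) = (w, k)
    rw [huk', rotF_rotF, neg_add_cancel, rotF_zero, neg_neg]
  · intro p hp
    show rotF (-(ukF p)) (rotF (ukF p) p) = p
    rw [rotF_rotF, neg_add_cancel, rotF_zero]

end CycleCount
section Series

open Finset MvPowerSeries

variable {N : ℕ}

/-- the product of inverse factorials prescribed by a multi-index -/
noncomputable def pifac (d : Fin (N + 1) →₀ ℕ) : ℚ :=
  ∏ r : Fin (N + 1), (((r : ℕ).factorial : ℚ))⁻¹ ^ d r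

lemma pifac_zero : pifac (0 : Fin (N + 1) →₀ ℕ) = 1 := by simp [pifac]

lemma pifac_add (a b : Fin (N + 1) →₀ ℕ) : pifac (a + b) = pifac a * pifac b := by
  simp [pifac, pow_add, Finset.prod_mul_distrib]

lemma pifac_single (q : Fin (N + 1)) :
    pifac (Finsupp.single q 1) = (((q : ℕ).factorial : ℚ))⁻¹ := by
  classical
  rw [pifac, Finset.prod_eq_single q]
  · rw [Finsupp.single_apply, if_pos rfl, pow_one]
  · intro r _ hr
    rw [Finsupp.single_apply, if_neg (fun h => hr h.symm), pow_zero]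
  · intro h
    exact absurd (Finset.mem_univ q) h

/-- number of Łukasiewicz-type forest words of type `q` with content `d` -/
noncomputable def cntW (N q : ℕ) (d : Fin (N + 1) →₀ ℕ) : ℕ := (FW N q (nsize d) d).card

lemma FW_one_zero_empty (n : ℕ) : FW N 1 n (0 : Fin (N + 1) →₀ ℕ) = ∅ := by
  apply Finset.eq_empty_of_forall_notMem
  intro p hp
  rw [mem_FW] at hp
  have h1 : nsize (0 : Fin (N + 1) →₀ ℕ) = n := hasCont_nsize hp.1
  have h2 : nsize (0 : Fin (N + 1) →₀ ℕ) = 0 := nsize_eq_zero.mpr rfl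
  have h3 : Luk (listOf p) := (isForest_one_iff _).mp hp.2
  have h4 := h3.length_pos
  rw [length_listOf] at h4
  omega

lemma cntW_zero (d : Fin (N + 1) →₀ ℕ) : cntW N 0 d = if d = 0 then 1 else 0 :=
  card_FW_zero _ d rfl

lemma cntW_succ (q : ℕ) (d : Fin (N + 1) →₀ ℕ) :
    cntW N (q + 1) d = ∑ ab ∈ Finset.HasAntidiagonal.antidiagonal d, cntW N 1 ab.1 * cntW N q ab.2 :=
  card_FW_succ q (nsize d) d rfl

lemma cntW_one (m : ℕ) (d : Fin (N + 1) →₀ ℕ) (hm : nsize d = m + 1) :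
    cntW N 1 d = ∑ q : Fin (N + 1), if Finsupp.single q 1 ≤ d
      then cntW N (q : ℕ) (d - Finsupp.single q 1) else 0 := by
  have h1 : cntW N 1 d = (FW N 1 (m + 1) d).card := by unfold cntW; rw [hm]
  rw [h1, card_FW_one m d hm]
  apply Finset.sum_congr rfl
  intro q _
  split_ifs with hle
  · have hs : nsize (d - Finsupp.single q 1) = m := by
      have h2 : Finsupp.single q 1 + (d - Finsupp.single q 1) = d := add_tsub_cancel_of_le hle
      have h3 := nsize_add (Finsupp.single q 1) (d - Finsupp.single q 1)
      rw [h2, nsize_single] at h3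
      omega
    unfold cntW; rw [hs]
  · rfl

/-- the series whose coefficients count forests of `q` trees -/
noncomputable def Vq (N q : ℕ) : MvPowerSeries (Fin (N + 1)) ℚ :=
  fun d => pifac d * (cntW N q d : ℚ)

lemma coeff_Vq (q : ℕ) (d : Fin (N + 1) →₀ ℕ) :
    MvPowerSeries.coeff d (Vq N q) = pifac d * (cntW N q d : ℚ) := rfl

lemma Vq_zero : Vq N 0 = 1 := by
  apply MvPowerSeries.ext
  intro d
  rw [coeff_Vq, MvPowerSeries.coeff_one, cntW_zero]
  split_ifs with h
  · subst h; rw [pifac_zero]; norm_num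
  · norm_num

lemma Vq_succ (q : ℕ) : Vq N (q + 1) = Vq N 1 * Vq N q := by
  classical
  apply MvPowerSeries.ext
  intro d
  rw [MvPowerSeries.coeff_mul, coeff_Vq, cntW_succ, Nat.cast_sum, Finset.mul_sum]
  apply Finset.sum_congr rfl
  rintro ⟨a, b⟩ hab
  rw [Finset.HasAntidiagonal.mem_antidiagonal] at hab
  rw [coeff_Vq, coeff_Vq]
  have hp : pifac d = pifac a * pifac b := by rw [← hab]; exact pifac_add a b
  rw [hp]
  push_cast
  ring

lemma Vq_pow (q : ℕ) : Vq N q = (Vq N 1) ^ q := by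
  induction q with
  | zero => rw [pow_zero]; exact Vq_zero
  | succ q ih => rw [Vq_succ, ih, pow_succ']

lemma coeff_X_mul' (q : Fin (N + 1)) (f : MvPowerSeries (Fin (N + 1)) ℚ)
    (d : Fin (N + 1) →₀ ℕ) :
    MvPowerSeries.coeff d (MvPowerSeries.X q * f)
      = if Finsupp.single q 1 ≤ d
          then MvPowerSeries.coeff (d - Finsupp.single q 1) f else 0 := by
  rw [show (MvPowerSeries.X q : MvPowerSeries (Fin (N + 1)) ℚ)
      = MvPowerSeries.monomial (Finsupp.single q 1) 1 from rfl,
    MvPowerSeries.coeff_monomial_mul]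
  split_ifs with h
  · rw [one_mul]
  · rfl

lemma cntW_one_zero : cntW N 1 (0 : Fin (N + 1) →₀ ℕ) = 0 := by
  unfold cntW
  rw [FW_one_zero_empty]
  rfl

lemma Vsol : IsDispersionlessTopologicalSolution N (Vq N 1) := by
  constructor
  · rw [← MvPowerSeries.coeff_zero_eq_constantCoeff_apply, coeff_Vq, cntW_one_zero]
    norm_num
  · apply MvPowerSeries.ext
    intro d
    rw [map_sum]
    have hterm : ∀ q : Fin (N + 1),
        MvPowerSeries.coeff d ((((q : ℕ).factorial : ℚ)⁻¹) •
          (MvPowerSeries.X q * (Vq N 1) ^ (q : ℕ)))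
        = (((q : ℕ).factorial : ℚ)⁻¹) * (if Finsupp.single q 1 ≤ d
            then pifac (d - Finsupp.single q 1) * (cntW N (q : ℕ) (d - Finsupp.single q 1) : ℚ)
            else 0) := by
      intro q
      rw [LinearMap.map_smul, smul_eq_mul, ← Vq_pow, coeff_X_mul']
      split_ifs with h
      · rw [coeff_Vq]
      · rfl
    rw [Finset.sum_congr rfl (fun q _ => hterm q), coeff_Vq]
    by_cases hd : d = 0
    · subst hd
      rw [cntW_one_zero]
      have hz : ∀ q : Fin (N + 1), (((q : ℕ).factorial : ℚ)⁻¹) *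
          (if Finsupp.single q 1 ≤ (0 : Fin (N + 1) →₀ ℕ)
            then pifac ((0 : Fin (N + 1) →₀ ℕ) - Finsupp.single q 1) *
              (cntW N (q : ℕ) ((0 : Fin (N + 1) →₀ ℕ) - Finsupp.single q 1) : ℚ)
            else 0) = 0 := by
        intro q
        rw [if_neg, mul_zero]
        rw [Finsupp.single_le_iff]
        simp
      rw [Finset.sum_congr rfl fun q _ => hz q, Finset.sum_const, smul_zero,
        Nat.cast_zero, mul_zero]
    · obtain ⟨m, hm⟩ : ∃ m, nsize d = m + 1 := by
        have := nsize_eq_zero (d := d)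
        rcases Nat.exists_eq_succ_of_ne_zero (fun h => hd (this.mp h)) with ⟨m, hm⟩
        exact ⟨m, hm⟩
      rw [cntW_one m d hm, Nat.cast_sum, Finset.mul_sum]
      apply Finset.sum_congr rfl
      intro q _
      split_ifs with hle
      · have hc : Finsupp.single q 1 + (d - Finsupp.single q 1) = d := add_tsub_cancel_of_le hle
        have hpd : pifac d = (((q : ℕ).factorial : ℚ))⁻¹ * pifac (d - Finsupp.single q 1) := by
          conv_lhs => rw [← hc]
          rw [pifac_add, pifac_single]
        rw [hpd]
        ring
      · rw [Nat.cast_zero, mul_zero, mul_zero]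

lemma sol_unique (v w : MvPowerSeries (Fin (N + 1)) ℚ)
    (hv : IsDispersionlessTopologicalSolution N v)
    (hw : IsDispersionlessTopologicalSolution N w) : v = w := by
  classical
  apply MvPowerSeries.ext
  intro d₀
  suffices h : ∀ n d, nsize d = n →
      MvPowerSeries.coeff d v = MvPowerSeries.coeff d w from h (nsize d₀) d₀ rfl
  intro n
  induction n using Nat.strong_induction_on with
  | _ n IH =>
  intro d hd
  rcases Nat.eq_zero_or_pos n with hn | hn
  · have hd0 : d = 0 := nsize_eq_zero.mp (by omega)
    subst hd0
    rw [MvPowerSeries.coeff_zero_eq_constantCoeff_apply,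
      MvPowerSeries.coeff_zero_eq_constantCoeff_apply, hv.1, hw.1]
  · have key : ∀ (q : ℕ) (e : Fin (N + 1) →₀ ℕ), nsize e < n →
        MvPowerSeries.coeff e (v ^ q) = MvPowerSeries.coeff e (w ^ q) := by
      intro q
      induction q with
      | zero => intro e _; rfl
      | succ q ihq =>
        intro e he
        rw [pow_succ, pow_succ, MvPowerSeries.coeff_mul, MvPowerSeries.coeff_mul]
        apply Finset.sum_congr rfl
        rintro ⟨a, b⟩ hab
        rw [Finset.HasAntidiagonal.mem_antidiagonal] at hab
        have hsz : nsize a + nsize b = nsize e := by rw [← nsize_add, hab]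
        have ha : MvPowerSeries.coeff a (v ^ q) = MvPowerSeries.coeff a (w ^ q) :=
          ihq a (by omega)
        have hb : MvPowerSeries.coeff b v = MvPowerSeries.coeff b w :=
          IH (nsize b) (by omega) b rfl
        rw [ha, hb]
    conv_lhs => rw [hv.2]
    conv_rhs => rw [hw.2]
    rw [map_sum, map_sum]
    apply Finset.sum_congr rfl
    intro q _
    rw [LinearMap.map_smul, LinearMap.map_smul, smul_eq_mul, smul_eq_mul]
    congr 1
    rw [coeff_X_mul', coeff_X_mul']
    split_ifs with hle
    · apply key
      have hc : Finsupp.single q 1 + (d - Finsupp.single q 1) = d := add_tsub_cancel_of_le hle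
      have h3 := nsize_add (Finsupp.single q 1) (d - Finsupp.single q 1)
      rw [hc, nsize_single] at h3
      omega
    · rfl

lemma explicit_eq (d : Fin (N + 1) →₀ ℕ) :
    explicitVCoeff N d = pifac d * (cntW N 1 d : ℚ) := by
  classical
  have hkey : explicitVCoeff N d = (1 / ((nsize d : ℕ) : ℚ)) *
      ∑ p ∈ Finset.univ.filter (fun p : Fin (nsize d) → Fin (N + 1) =>
          (∑ i, ((p i : ℕ))) + 1 = nsize d ∧
          ∀ q, d q = (Finset.univ.filter fun i => p i = q).card),
        ∏ i, (1 / (((p i : ℕ).factorial : ℚ))) := rfl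
  rw [hkey]
  by_cases hn : nsize d = 0
  · have hd0 : d = 0 := nsize_eq_zero.mp hn
    have hfil : (Finset.univ.filter (fun p : Fin (nsize d) → Fin (N + 1) =>
        (∑ i, ((p i : ℕ))) + 1 = nsize d ∧
        ∀ q, d q = (Finset.univ.filter fun i => p i = q).card)) = ∅ := by
      apply Finset.eq_empty_of_forall_notMem
      intro p hp
      rw [Finset.mem_filter] at hp
      have := hp.2.1
      omega
    rw [hfil, Finset.sum_empty, mul_zero]
    have : cntW N 1 d = 0 := by rw [hd0]; exact cntW_one_zero
    rw [this]
    norm_num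
  · obtain ⟨m, hm⟩ := Nat.exists_eq_succ_of_ne_zero hn
    by_cases hwt : (∑ r : Fin (N + 1), (r : ℕ) * d r) + 1 = nsize d
    · have hfil : (Finset.univ.filter (fun p : Fin (nsize d) → Fin (N + 1) =>
          (∑ i, ((p i : ℕ))) + 1 = nsize d ∧
          ∀ q, d q = (Finset.univ.filter fun i => p i = q).card)) = SW N (nsize d) d := by
        ext p
        rw [Finset.mem_filter, mem_SW]
        constructor
        · rintro ⟨-, -, hc⟩; exact hc
        · intro hc
          exact ⟨Finset.mem_univ _, by rw [hasCont_sumval hc]; exact hwt, hc⟩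
      rw [hfil]
      have hterm : ∀ p ∈ SW N (nsize d) d,
          ∏ i, (1 / (((p i : ℕ).factorial : ℚ))) = pifac d := by
        intro p hp
        rw [mem_SW] at hp
        rw [hasCont_prod hp (fun r => 1 / (((r : ℕ).factorial : ℚ)))]
        unfold pifac
        exact Finset.prod_congr rfl fun r _ => by rw [one_div]
      rw [Finset.sum_congr rfl hterm, Finset.sum_const, card_SW_eq (nsize d) d hwt,
        nsmul_eq_mul]
      have hn0 : ((nsize d : ℕ) : ℚ) ≠ 0 := by
        rw [hm]; exact_mod_cast Nat.succ_ne_zero m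
      have hcnt : cntW N 1 d = (FW N 1 (nsize d) d).card := rfl
      rw [hcnt]
      push_cast
      field_simp
    · have hfil : (Finset.univ.filter (fun p : Fin (nsize d) → Fin (N + 1) =>
          (∑ i, ((p i : ℕ))) + 1 = nsize d ∧
          ∀ q, d q = (Finset.univ.filter fun i => p i = q).card)) = ∅ := by
        apply Finset.eq_empty_of_forall_notMem
        intro p hp
        rw [Finset.mem_filter] at hp
        apply hwt
        rw [← hasCont_sumval hp.2.2]
        exact hp.2.1
      rw [hfil, Finset.sum_empty, mul_zero]
      have hcnt : cntW N 1 d = 0 := by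
        unfold cntW
        rw [Finset.card_eq_zero]
        apply Finset.eq_empty_of_forall_notMem
        intro p hp
        rw [mem_FW] at hp
        apply hwt
        have hluk : Luk (listOf p) := (isForest_one_iff _).mp hp.2
        have h1 := hluk.1
        rw [sum_listOf, length_listOf] at h1
        rw [← hasCont_sumval hp.1]
        exact h1
      rw [hcnt]
      norm_num

end Series

/-- There is a unique formal power series `v` in `t₀,…,t_N` with zero constant term
satisfying `v = Σ_{p=0}^N t_p v^p/p!`, and it is given by
`v = Σ_{n≥1} (1/n) Σ_{p₁+⋯+p_n=n−1} (t_{p₁}/p₁!)⋯(t_{p_n}/p_n!)`. -/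
theorem dispersionless_topological_solution_unique_and_explicit
    (N : ℕ) (hN : 1 ≤ N) :
    (∃! v : MvPowerSeries (Fin (N + 1)) ℚ, IsDispersionlessTopologicalSolution N v)
    ∧ ∀ v : MvPowerSeries (Fin (N + 1)) ℚ, IsDispersionlessTopologicalSolution N v →
        ∀ d, MvPowerSeries.coeff d v = explicitVCoeff N d := by
  constructor
  · exact ⟨Vq N 1, Vsol, fun v hv => sol_unique v (Vq N 1) hv Vsol⟩
  · intro v hv d
    rw [sol_unique v (Vq N 1) hv Vsol, explicit_eq, coeff_Vq]
end

section
/- With F₀ = Σ_{n≥3} [1/(n(n−1)(n−2))] Σ_{p₁+⋯+p_n=n−3} Π_i (t_{p_i}/p_i!) and v = Σ_{n≥1} (1/n) Σ_{p₁+⋯+p_n=n−1} Π_i (t_{p_i}/p_i!) viewed as formal power series in t₀, t₁, …, t_N (indices p_i ranging over 0,…,N), one has ∂²F₀/∂t₀² = v. -/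
/-- Coefficient at the monomial `d` of
`F₀ = Σ_{n≥3} [1/(n(n−1)(n−2))] Σ_{p₁+⋯+p_n=n−3} (t_{p₁}/p₁!)⋯(t_{p_n}/p_n!)`. -/
noncomputable def F0Coeff (N : ℕ) (d : Fin (N + 1) →₀ ℕ) : ℚ :=
  (1 / (((d.sum fun _ k => k : ℕ) : ℚ) * (((d.sum fun _ k => k : ℕ) : ℚ) - 1)
      * (((d.sum fun _ k => k : ℕ) : ℚ) - 2))) *
    ∑ p ∈ Finset.univ.filter (fun p : Fin (d.sum fun _ k => k) → Fin (N + 1) =>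
        (∑ i, ((p i : ℕ))) + 3 = d.sum (fun _ k => k) ∧
        ∀ q, d q = (Finset.univ.filter fun i => p i = q).card),
      ∏ i, (1 / (((p i : ℕ).factorial : ℚ)))

/-- Partial derivative `∂/∂t_k` of a formal power series, coefficientwise. -/
noncomputable def psDeriv (N : ℕ) (k : Fin (N + 1))
    (F : MvPowerSeries (Fin (N + 1)) ℚ) : MvPowerSeries (Fin (N + 1)) ℚ :=
  fun d => ((d k + 1 : ℕ) : ℚ) * MvPowerSeries.coeff (d + Finsupp.single k 1) F

/- ### Auxiliary machinery -/

/-- Non-dependent wrapper around `Fin.insertNth`. -/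
private def ins {α : Type*} {m : ℕ} (a : Fin (m + 1)) (x : α) (h : Fin m → α) :
    Fin (m + 1) → α := a.insertNth x h

private lemma ins_same {α : Type*} {m : ℕ} (a : Fin (m + 1)) (x : α) (h : Fin m → α) :
    ins a x h a = x := @Fin.insertNth_apply_same m (fun _ => α) a x h

private lemma ins_succAbove {α : Type*} {m : ℕ} (a : Fin (m + 1)) (x : α) (h : Fin m → α)
    (j : Fin m) : ins a x h (a.succAbove j) = h j :=
  @Fin.insertNth_apply_succAbove m (fun _ => α) a x h j

private lemma ins_self {α : Type*} {m : ℕ} (a : Fin (m + 1)) (f : Fin (m + 1) → α) :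
    ins a (f a) (fun j => f (a.succAbove j)) = f :=
  @Fin.insertNth_self_removeNth m (fun _ => α) a f

private lemma ins_inj {α : Type*} {m : ℕ} (a : Fin (m + 1)) (x : α) {h h' : Fin m → α}
    (H : ins a x h = ins a x h') : h = h' := by
  funext j
  have := congrFun H (a.succAbove j)
  rwa [ins_succAbove, ins_succAbove] at this

/-- The inner weighted sum appearing in both coefficients, with the domain size `n`,
the shift `c` and the target degree `m` as free parameters. -/
private noncomputable def auxS (N : ℕ) (d : Fin (N + 1) →₀ ℕ) (n c m : ℕ) : ℚ :=
  ∑ p ∈ Finset.univ.filter (fun p : Fin n → Fin (N + 1) =>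
      (∑ i, ((p i : ℕ))) + c = m ∧
      ∀ q, d q = (Finset.univ.filter fun i => p i = q).card),
    ∏ i, (1 / (((p i : ℕ).factorial : ℚ)))

private lemma F0Coeff_eq (N : ℕ) (d : Fin (N + 1) →₀ ℕ) :
    F0Coeff N d = (1 / (((d.sum fun _ k => k : ℕ) : ℚ) * (((d.sum fun _ k => k : ℕ) : ℚ) - 1)
      * (((d.sum fun _ k => k : ℕ) : ℚ) - 2))) *
      auxS N d (d.sum fun _ k => k) 3 (d.sum fun _ k => k) := rfl

private lemma explicitVCoeff_eq (N : ℕ) (d : Fin (N + 1) →₀ ℕ) :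
    explicitVCoeff N d = (1 / ((d.sum fun _ k => k : ℕ) : ℚ)) *
      auxS N d (d.sum fun _ k => k) 1 (d.sum fun _ k => k) := rfl

private lemma card_filter_ins {N m : ℕ} (a : Fin (m + 1)) (x : Fin (N + 1))
    (h : Fin m → Fin (N + 1)) (q : Fin (N + 1)) :
    (Finset.univ.filter fun i => ins a x h i = q).card
      = (if x = q then 1 else 0) + (Finset.univ.filter fun k => h k = q).card := by
  classical
  rw [Finset.card_filter, Finset.card_filter,
    Fin.sum_univ_succAbove (fun i => if ins a x h i = q then 1 else 0) a]
  simp [ins_same, ins_succAbove]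

private lemma sum_ins_zero {N m : ℕ} (a : Fin (m + 1)) (h : Fin m → Fin (N + 1)) :
    (∑ i, ((ins (α := Fin (N + 1)) a 0 h i : ℕ))) = ∑ k, ((h k : ℕ)) := by
  rw [Fin.sum_univ_succAbove (fun i => ((ins (α := Fin (N + 1)) a 0 h i : ℕ))) a]
  simp [ins_same, ins_succAbove]

private lemma prod_ins_zero {N m : ℕ} (a : Fin (m + 1)) (h : Fin m → Fin (N + 1)) :
    (∏ i, (1 / (((ins (α := Fin (N + 1)) a 0 h i : ℕ).factorial : ℚ))))
      = ∏ k, (1 / (((h k : ℕ).factorial : ℚ))) := by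
  rw [Fin.prod_univ_succAbove (fun i => (1 / (((ins (α := Fin (N + 1)) a 0 h i : ℕ).factorial : ℚ)))) a]
  simp [ins_same, ins_succAbove]

/-- The key double-counting identity. -/
private lemma key (N : ℕ) (d : Fin (N + 1) →₀ ℕ) (n m : ℕ) :
    ((d 0 : ℚ) + 2) * ((d 0 : ℚ) + 1)
        * auxS N (d + Finsupp.single 0 2) (n + 2) 3 (m + 2)
      = ((n : ℚ) + 2) * ((n : ℚ) + 1) * auxS N d n 1 m := by
  classical
  have hstep1 : ((d 0 : ℚ) + 2) * ((d 0 : ℚ) + 1)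
        * auxS N (d + Finsupp.single 0 2) (n + 2) 3 (m + 2)
      = ∑ x ∈ (Finset.univ.filter (fun p : Fin (n + 2) → Fin (N + 1) =>
            (∑ i, ((p i : ℕ))) + 3 = m + 2 ∧
            ∀ q, (d + Finsupp.single 0 2 : Fin (N + 1) →₀ ℕ) q
              = (Finset.univ.filter fun i => p i = q).card)).sigma
          (fun p' => (Finset.univ.filter fun i => p' i = (0 : Fin (N + 1))).offDiag),
          ∏ i, (1 / (((x.1 i : ℕ).factorial : ℚ))) := by
    rw [Finset.sum_sigma]
    simp only [auxS]
    rw [Finset.mul_sum]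
    apply Finset.sum_congr rfl
    intro p' hp'
    have hmem := (Finset.mem_filter.mp hp').2.2 (0 : Fin (N + 1))
    have hd0 : (Finset.univ.filter fun i => p' i = (0 : Fin (N + 1))).card = d 0 + 2 := by
      rw [← hmem]; simp [Finsupp.single_apply]
    rw [Finset.sum_const, Finset.offDiag_card, hd0]
    have hcard : (d 0 + 2) * (d 0 + 2) - (d 0 + 2) = (d 0 + 2) * (d 0 + 1) :=
      Nat.sub_eq_of_eq_add (by ring)
    rw [hcard, nsmul_eq_mul]
    push_cast
    ring
  have hstep2 : ((n : ℚ) + 2) * ((n : ℚ) + 1) * auxS N d n 1 m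
      = ∑ y ∈ (Finset.univ.filter (fun p : Fin n → Fin (N + 1) =>
            (∑ i, ((p i : ℕ))) + 1 = m ∧
            ∀ q, d q = (Finset.univ.filter fun i => p i = q).card)).sigma
          (fun _ => (Finset.univ : Finset (Fin (n + 2) × Fin (n + 1)))),
          ∏ i, (1 / (((y.1 i : ℕ).factorial : ℚ))) := by
    rw [Finset.sum_sigma]
    simp only [auxS]
    rw [Finset.mul_sum]
    apply Finset.sum_congr rfl
    intro p _
    rw [Finset.sum_const, Finset.card_univ]
    simp only [Fintype.card_prod, Fintype.card_fin]
    rw [nsmul_eq_mul]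
    push_cast
    ring
  rw [hstep1, hstep2]
  refine (Finset.sum_bij
    (fun (y : Σ _ : Fin n → Fin (N + 1), Fin (n + 2) × Fin (n + 1)) _ =>
      (⟨ins y.2.1 0 (ins y.2.2 0 y.1), (y.2.1, y.2.1.succAbove y.2.2)⟩ :
        Σ _ : Fin (n + 2) → Fin (N + 1), Fin (n + 2) × Fin (n + 2)))
    ?_ ?_ ?_ ?_).symm
  · rintro ⟨p, a, b⟩ hy
    dsimp only at hy ⊢
    rw [Finset.mem_sigma] at hy ⊢
    obtain ⟨hpA, -⟩ := hy
    obtain ⟨-, hdeg, hfib⟩ := Finset.mem_filter.mp hpA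
    replace hdeg : (∑ i, ((p i : ℕ))) + 1 = m := hdeg
    replace hfib : ∀ q, d q = (Finset.univ.filter fun i => p i = q).card := hfib
    have hsum : (∑ i, ((ins (α := Fin (N + 1)) a 0 (ins b 0 p) i : ℕ))) = ∑ i, ((p i : ℕ)) := by
      rw [sum_ins_zero, sum_ins_zero]
    constructor
    · refine Finset.mem_filter.mpr ⟨Finset.mem_univ _, ?_, ?_⟩
      · rw [hsum]; omega
      · intro q
        rw [card_filter_ins, card_filter_ins, ← hfib q]
        simp only [Finsupp.add_apply, Finsupp.single_apply]
        split_ifs <;> omega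
    · refine Finset.mem_offDiag.mpr ⟨?_, ?_, ?_⟩
      · simp [ins_same]
      · simp [ins_succAbove, ins_same]
      · exact (Fin.succAbove_ne a b).symm
  · rintro ⟨p₁, a₁, b₁⟩ h₁ ⟨p₂, a₂, b₂⟩ h₂ heq
    simp only [Sigma.mk.inj_iff, Prod.mk.injEq, heq_eq_eq] at heq
    obtain ⟨hp', ha, hsa⟩ := heq
    subst ha
    have hb : b₁ = b₂ := Fin.succAbove_right_injective hsa
    subst hb
    have hinner : ins b₁ 0 p₁ = ins b₁ 0 p₂ := ins_inj a₁ 0 hp'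
    have hp : p₁ = p₂ := ins_inj b₁ 0 hinner
    simp [hp]
  · rintro ⟨p', i, j⟩ hx
    rw [Finset.mem_sigma] at hx
    obtain ⟨hpA', hoff⟩ := hx
    obtain ⟨hiZ, hjZ, hij⟩ := Finset.mem_offDiag.mp hoff
    have hzi : p' i = 0 := (Finset.mem_filter.mp hiZ).2
    have hzj : p' j = 0 := (Finset.mem_filter.mp hjZ).2
    obtain ⟨b, hb⟩ := Fin.exists_succAbove_eq (Ne.symm hij)
    set q : Fin (n + 1) → Fin (N + 1) := fun t => p' (i.succAbove t) with hqdef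
    have hq : ins i 0 q = p' := by
      rw [← hzi, hqdef]; exact ins_self i p'
    set p : Fin n → Fin (N + 1) := fun k => q (b.succAbove k) with hpdef
    have hqb : q b = 0 := by rw [hqdef]; show p' (i.succAbove b) = 0; rw [hb]; exact hzj
    have hp : ins b 0 p = q := by
      rw [← hqb, hpdef]; exact ins_self b q
    obtain ⟨-, hdeg', hfib'⟩ := Finset.mem_filter.mp hpA'
    replace hdeg' : (∑ k, ((p' k : ℕ))) + 3 = m + 2 := hdeg'
    replace hfib' : ∀ r, (d + Finsupp.single 0 2 : Fin (N + 1) →₀ ℕ) r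
        = (Finset.univ.filter fun k => p' k = r).card := hfib'
    have hsum : (∑ k, ((p' k : ℕ))) = ∑ k, ((p k : ℕ)) := by
      rw [← hq, ← hp, sum_ins_zero, sum_ins_zero]
    have hfib : ∀ r, d r = (Finset.univ.filter fun k => p k = r).card := by
      intro r
      have h1 := hfib' r
      rw [← hq, ← hp, card_filter_ins, card_filter_ins] at h1
      simp only [Finsupp.add_apply, Finsupp.single_apply] at h1
      split_ifs at h1 <;> omega
    have hdeg : (∑ k, ((p k : ℕ))) + 1 = m := by
      rw [← hsum]; omega
    refine ⟨⟨p, (i, b)⟩, Finset.mem_sigma.mpr ⟨Finset.mem_filter.mpr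
      ⟨Finset.mem_univ _, hdeg, hfib⟩, Finset.mem_univ _⟩, ?_⟩
    dsimp only
    rw [hp, hq, hb]
  · rintro ⟨p, a, b⟩ _
    simp only
    rw [prod_ins_zero, prod_ins_zero]

/-- `∂²F₀/∂t₀² = v`: the second `t₀`-derivative of the genus-zero free energy equals
the topological solution of the dispersionless KdV hierarchy. -/
theorem second_derivative_of_F0_is_v
    (N : ℕ) (hN : 1 ≤ N) (F V : MvPowerSeries (Fin (N + 1)) ℚ)
    (hF : ∀ d, MvPowerSeries.coeff d F = F0Coeff N d)
    (hV : ∀ d, MvPowerSeries.coeff d V = explicitVCoeff N d) :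
    psDeriv N 0 (psDeriv N 0 F) = V := by
  classical
  funext d
  have hco : ∀ (G : MvPowerSeries (Fin (N + 1)) ℚ) e, MvPowerSeries.coeff e G = G e :=
    fun G e => rfl
  have hd2 : d + Finsupp.single (0 : Fin (N + 1)) 1 + Finsupp.single 0 1
      = d + Finsupp.single 0 2 := by
    rw [add_assoc, ← Finsupp.single_add]
  have happ : (d + Finsupp.single (0 : Fin (N + 1)) 1 : Fin (N + 1) →₀ ℕ) 0 = d 0 + 1 := by
    simp [Finsupp.add_apply, Finsupp.single_apply]
  have L : psDeriv N 0 (psDeriv N 0 F) d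
      = ((d 0 + 1 : ℕ) : ℚ) * (((d 0 + 1 + 1 : ℕ)) : ℚ)
        * F0Coeff N (d + Finsupp.single 0 2) := by
    have e1 : psDeriv N 0 (psDeriv N 0 F) d
        = ((d 0 + 1 : ℕ) : ℚ) * (psDeriv N 0 F) (d + Finsupp.single 0 1) := rfl
    have e2 : (psDeriv N 0 F) (d + Finsupp.single 0 1)
        = ((((d + Finsupp.single (0 : Fin (N + 1)) 1 : Fin (N + 1) →₀ ℕ)) 0 + 1 : ℕ) : ℚ)
          * MvPowerSeries.coeff (d + Finsupp.single 0 1 + Finsupp.single 0 1) F := rfl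
    rw [e1, e2, hd2, hF, happ]
    ring
  have R : (V : MvPowerSeries (Fin (N + 1)) ℚ) d = explicitVCoeff N d := by
    rw [← hV d]
    exact (hco V d).symm
  rw [L, R]
  set n : ℕ := d.sum fun _ k => k with hn
  have hsum2 : ((d + Finsupp.single (0 : Fin (N + 1)) 2).sum fun _ k => k) = n + 2 := by
    rw [Finsupp.sum_add_index' (fun _ => rfl) (fun _ _ _ => rfl),
      Finsupp.sum_single_index rfl]
  rw [F0Coeff_eq, explicitVCoeff_eq, hsum2, ← hn]
  have hkey := key N d n n
  rcases Nat.eq_zero_or_pos n with hn0 | hnpos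
  · rw [hn0]
    norm_num
  · have h0 : ((n : ℚ)) ≠ 0 := by positivity
    have h1 : ((n : ℚ) + 1) ≠ 0 := by positivity
    have h2 : ((n : ℚ) + 2) ≠ 0 := by positivity
    have hcast : (((n + 2 : ℕ)) : ℚ) = (n : ℚ) + 2 := by push_cast; ring
    rw [hcast]
    have e1 : ((n : ℚ) + 2) - 1 = (n : ℚ) + 1 := by ring
    have e2 : ((n : ℚ) + 2) - 2 = (n : ℚ) := by ring
    rw [e1, e2]
    push_cast
    field_simp
    linear_combination hkey
end
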